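/- Let X ⊆ ℝ^n be a convex polytope (convex hull of finitely many points) and I ⊊ [n]. Then G_I(x) = sup{ min_{i ∈ [n]∖I} z_i : z ∈ X, z_i = x_i for i ∈ I } is lower semicontinuous relative to X: for any sequence x_t in X converging to x ∈ X, liminf_t G_I(x_t) ≥ G_I(x). -/

import Mathlib

open Filter Topology

/-- f_I(z) = min of the components of z outside I. -/
noncomputable def fI {n : ℕ} (I : Finset (Fin n)) (z : Fin n → ℝ) : ℝ :=
  sInf {r : ℝ | ∃ i : Fin n, i ∉ I ∧ r = z i}

/-- G_I with values in the extended reals (sup ∅ = −∞). -/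
noncomputable def GfunE {n : ℕ} (X : Set (Fin n → ℝ)) (I : Finset (Fin n)) (x : Fin n → ℝ) :
    EReal :=
  sSup {v : EReal | ∃ z ∈ X, (∀ i ∈ I, z i = x i) ∧ v = (fI I z : EReal)}

private lemma tendsto_finset_inf' {ι : Type*} {t : Finset ι} (ht : t.Nonempty)
    (f : ℕ → ι → ℝ) (g : ι → ℝ)
    (h : ∀ i ∈ t, Tendsto (fun l => f l i) atTop (𝓝 (g i))) :
    Tendsto (fun l => t.inf' ht (f l)) atTop (𝓝 (t.inf' ht g)) := by
  induction ht using Finset.Nonempty.cons_induction with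
  | singleton a => simpa using h a (by simp)
  | cons a s hmem hs ih =>
    simp only [Finset.inf'_cons (H := hs)]
    exact (h a (by simp)).min (ih fun i hi => h i (Finset.mem_cons_of_mem hi))

private lemma fI_aux {n : ℕ} {I : Finset (Fin n)} (hne : Iᶜ.Nonempty) (z : Fin n → ℝ) :
    sInf {r : ℝ | ∃ i : Fin n, i ∉ I ∧ r = z i} = Iᶜ.inf' hne z := by
  have h1 : {r : ℝ | ∃ i : Fin n, i ∉ I ∧ r = z i} = ↑(Iᶜ.image z) := by
    ext r
    simp [Finset.mem_image, Finset.mem_compl, eq_comm]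
  have h2 : (Iᶜ.image z).Nonempty := hne.image z
  rw [h1, h2.csInf_eq_min', Finset.min'_eq_inf', Finset.inf'_image]
  rfl

private lemma mem_hull_iff {n : ℕ} (S : Finset (Fin n → ℝ)) (x : Fin n → ℝ) :
    x ∈ convexHull ℝ (S : Set (Fin n → ℝ)) ↔
    ∃ w : {y // y ∈ S} → ℝ, (∀ j, 0 ≤ w j) ∧ ∑ j, w j = 1 ∧
      ∑ j, w j • (j : Fin n → ℝ) = x := by
  rw [Finset.convexHull_eq]
  constructor
  · rintro ⟨w, hw0, hw1, hwx⟩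
    rw [Finset.centerMass_eq_of_sum_1 _ _ hw1] at hwx
    refine ⟨fun j => w ↑j, fun j => hw0 _ j.2, ?_, ?_⟩
    · rw [Finset.univ_eq_attach, Finset.sum_attach S (fun y => w y)]; exact hw1
    · rw [Finset.univ_eq_attach, Finset.sum_attach S (fun y => w y • y)]; exact hwx
  · rintro ⟨w, hw0, hw1, hwx⟩
    refine ⟨fun y => if h : y ∈ S then w ⟨y, h⟩ else 0, ?_, ?_, ?_⟩
    · intro y hy; simp only [dif_pos hy]; exact hw0 _
    · rw [← Finset.sum_attach S]
      simp only [Finset.coe_mem, dif_pos, Subtype.coe_eta]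
      rw [← Finset.univ_eq_attach]; exact hw1
    · have hs1 : ∑ y ∈ S, (if h : y ∈ S then w ⟨y, h⟩ else 0) = 1 := by
        rw [← Finset.sum_attach S]
        simp only [Finset.coe_mem, dif_pos, Subtype.coe_eta]
        rw [← Finset.univ_eq_attach]; exact hw1
      rw [Finset.centerMass_eq_of_sum_1 _ _ hs1]
      rw [← Finset.sum_attach S]
      simp only [Finset.coe_mem, dif_pos, Subtype.coe_eta, id]
      rw [← Finset.univ_eq_attach]; exact hwx

private lemma exists_theta {ι : Type*} [Fintype ι] [Nonempty ι] (u : ℕ → ι → ℝ)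
    (μ lam : ι → ℝ)
    (hu : ∀ l j, 0 ≤ u l j) (hlam : ∀ j, 0 ≤ lam j)
    (hconv : ∀ j, Tendsto (fun l => u l j) atTop (𝓝 (μ j))) :
    ∃ θ : ℕ → ℝ, (∀ l j, 0 ≤ u l j + θ l * (lam j - μ j)) ∧ Tendsto θ atTop (𝓝 1) := by
  classical
  set f : ℕ → ι → ℝ := fun l j => if lam j - μ j < 0 then u l j / (μ j - lam j) else 1 with hf
  set c : ι → ℝ := fun j => if lam j - μ j < 0 then μ j / (μ j - lam j) else 1 with hc
  set θ : ℕ → ℝ := fun l => min 1 (Finset.univ.inf' Finset.univ_nonempty (f l)) with hθ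
  have hθ0 : ∀ l, 0 ≤ θ l := by
    intro l
    refine le_min zero_le_one (Finset.le_inf' _ _ fun j _ => ?_)
    simp only [hf]
    split_ifs with hd
    · exact div_nonneg (hu l j) (by linarith)
    · exact zero_le_one
  refine ⟨θ, ?_, ?_⟩
  · intro l j
    by_cases hd : lam j - μ j < 0
    · have h1 : θ l ≤ f l j := le_trans (min_le_right _ _)
        (Finset.inf'_le _ (Finset.mem_univ j))
      have hpos : 0 < μ j - lam j := by linarith
      rw [hf] at h1
      simp only [if_pos hd] at h1
      rw [le_div_iff₀ hpos] at h1
      nlinarith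
    · have h2 : 0 ≤ lam j - μ j := not_lt.mp hd
      have h3 := mul_nonneg (hθ0 l) h2
      have h4 := hu l j
      linarith
  · have hinf : Tendsto (fun l => Finset.univ.inf' Finset.univ_nonempty (f l)) atTop
        (𝓝 (Finset.univ.inf' Finset.univ_nonempty c)) := by
      refine tendsto_finset_inf' _ _ _ fun j _ => ?_
      simp only [hf, hc]
      split_ifs with hd
      · exact (hconv j).div_const _
      · exact tendsto_const_nhds
    have hc1 : (1 : ℝ) ≤ Finset.univ.inf' Finset.univ_nonempty c := by
      refine Finset.le_inf' _ _ fun j _ => ?_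
      simp only [hc]
      split_ifs with hd
      · have hpos : 0 < μ j - lam j := by linarith
        rw [le_div_iff₀ hpos]
        have := hlam j
        linarith
      · exact le_rfl
    have hmin : Tendsto (fun l => min 1 (Finset.univ.inf' Finset.univ_nonempty (f l)))
        atTop (𝓝 (min 1 (Finset.univ.inf' Finset.univ_nonempty c))) :=
      tendsto_const_nhds.min hinf
    rw [min_eq_left hc1] at hmin
    exact hmin

theorem Gfun_lsc_on_polytope {n : ℕ} (X : Set (Fin n → ℝ))
    (S : Finset (Fin n → ℝ)) (hX : X = convexHull ℝ (S : Set (Fin n → ℝ)))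
    (I : Finset (Fin n)) (hI : I ≠ Finset.univ) :
    ∀ x ∈ X, ∀ seq : ℕ → (Fin n → ℝ), (∀ t, seq t ∈ X) →
      Tendsto seq atTop (𝓝 x) →
      GfunE X I x ≤ liminf (fun t => GfunE X I (seq t)) atTop := by
  subst hX
  intro x hx seq hseq htends
  refine sSup_le ?_
  rintro v ⟨z, hzX, hzI, rfl⟩
  set r := fI I z with hr
  have hIc : Iᶜ.Nonempty := by
    obtain ⟨i, hi⟩ : ∃ i, i ∉ I := by
      by_contra hA
      push_neg at hA
      exact hI (Finset.eq_univ_iff_forall.mpr hA)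
    exact ⟨i, Finset.mem_compl.mpr hi⟩
  have key : ∀ ε : ℝ, 0 < ε → ∀ᶠ t in atTop,
      ((r - ε : ℝ) : EReal) ≤ GfunE (convexHull ℝ ↑S) I (seq t) := by
    intro ε hε
    by_contra hcon
    rw [Filter.not_eventually] at hcon
    have hfreq : ∃ᶠ t in atTop, GfunE (convexHull ℝ ↑S) I (seq t) < ((r - ε : ℝ) : EReal) :=
      hcon.mono fun t ht => not_le.mp ht
    obtain ⟨φ, hφm, hφ⟩ := Filter.extraction_of_frequently_atTop hfreq
    have hSne : Nonempty {y // y ∈ S} := by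
      obtain ⟨w, -, hw1, -⟩ := (mem_hull_iff S x).mp hx
      by_contra hne
      rw [not_nonempty_iff] at hne
      rw [Finset.univ_eq_empty, Finset.sum_empty] at hw1
      exact one_ne_zero hw1.symm
    have hrep : ∀ k : ℕ, ∃ w : {y // y ∈ S} → ℝ, (∀ j, 0 ≤ w j) ∧ ∑ j, w j = 1 ∧
        ∑ j, w j • (j : Fin n → ℝ) = seq (φ k) := fun k => (mem_hull_iff S _).mp (hseq (φ k))
    choose u hu0 hu1 hu2 using hrep
    set K : Set ({y // y ∈ S} → ℝ) := {v | ∀ j, 0 ≤ v j} ∩ {v | ∑ j, v j = 1} with hK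
    have hKclosed : IsClosed K := by
      refine IsClosed.inter ?_
        (isClosed_eq (continuous_finset_sum _ fun j _ => continuous_apply j) continuous_const)
      rw [Set.setOf_forall]
      exact isClosed_iInter fun j => isClosed_le continuous_const (continuous_apply j)
    have hKsub : K ⊆ Set.pi Set.univ fun _ => Set.Icc (0:ℝ) 1 := by
      rintro w ⟨h0, h1⟩ j _
      refine ⟨h0 j, ?_⟩
      have hle := Finset.single_le_sum (f := w) (fun i _ => h0 i) (Finset.mem_univ j)
      rw [h1] at hle
      exact hle
    have hKcomp : IsCompact K :=
      (isCompact_univ_pi fun _ => isCompact_Icc).of_isClosed_subset hKclosed hKsub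
    obtain ⟨μ, hμK, ψ, hψm, hψt⟩ :=
      hKcomp.tendsto_subseq (x := u) (fun k => ⟨hu0 k, hu1 k⟩)
    have hcoordt : ∀ j, Tendsto (fun l => u (ψ l) j) atTop (𝓝 (μ j)) :=
      fun j => tendsto_pi_nhds.mp hψt j
    obtain ⟨lam, hlam0, hlam1, hlamz⟩ := (mem_hull_iff S z).mp hzX
    have hμx : ∑ j, μ j • (j : Fin n → ℝ) = x := by
      have h1 : Tendsto (fun l => ∑ j, u (ψ l) j • (j : Fin n → ℝ)) atTop
          (𝓝 (∑ j, μ j • (j : Fin n → ℝ))) :=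
        tendsto_finset_sum _ fun j _ => (hcoordt j).smul_const _
      have h2 : Tendsto (fun l => seq (φ (ψ l))) atTop (𝓝 x) :=
        htends.comp ((hφm.comp hψm).tendsto_atTop)
      have h3 : (fun l => ∑ j, u (ψ l) j • (j : Fin n → ℝ)) = fun l => seq (φ (ψ l)) :=
        funext fun l => hu2 (ψ l)
      rw [h3] at h1
      exact tendsto_nhds_unique h1 h2
    obtain ⟨θ, hθnn, hθt⟩ :=
      exists_theta (fun l => u (ψ l)) μ lam (fun l j => hu0 (ψ l) j) hlam0 hcoordt
    set lamseq : ℕ → {y // y ∈ S} → ℝ := fun l j => u (ψ l) j + θ l * (lam j - μ j)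
      with hlamseq
    have hsum1 : ∀ l, ∑ j, lamseq l j = 1 := by
      intro l
      simp only [hlamseq]
      rw [Finset.sum_add_distrib, ← Finset.mul_sum, Finset.sum_sub_distrib, hlam1,
        hμK.2, hu1 (ψ l)]
      ring
    have hzmem : ∀ l, (∑ j, lamseq l j • (j : Fin n → ℝ)) ∈ convexHull ℝ (S : Set (Fin n → ℝ)) :=
      fun l => (mem_hull_iff S _).mpr ⟨lamseq l, fun j => hθnn l j, hsum1 l, rfl⟩
    have e1 : ∀ (w : {y // y ∈ S} → ℝ) (i : Fin n),
        (∑ j, w j • (j : Fin n → ℝ)) i = ∑ j, w j * (j : Fin n → ℝ) i := by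
      intro w i
      rw [Finset.sum_apply]
      simp [Pi.smul_apply, smul_eq_mul]
    have hIcoord : ∀ l, ∀ i ∈ I, (∑ j, lamseq l j • (j : Fin n → ℝ)) i = seq (φ (ψ l)) i := by
      intro l i hi
      rw [e1]
      have hterm : ∀ j : {y // y ∈ S}, lamseq l j * (j : Fin n → ℝ) i =
          u (ψ l) j * (j : Fin n → ℝ) i + θ l * (lam j * (j : Fin n → ℝ) i)
            - θ l * (μ j * (j : Fin n → ℝ) i) := by
        intro j; simp only [hlamseq]; ring
      rw [Finset.sum_congr rfl (fun j _ => hterm j), Finset.sum_sub_distrib,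
        Finset.sum_add_distrib, ← Finset.mul_sum, ← Finset.mul_sum]
      have h4 : ∑ j, u (ψ l) j * (j : Fin n → ℝ) i = seq (φ (ψ l)) i := by
        rw [← e1, hu2]
      have h5 : ∑ j, lam j * (j : Fin n → ℝ) i = z i := by rw [← e1, hlamz]
      have h6 : ∑ j, μ j * (j : Fin n → ℝ) i = x i := by rw [← e1, hμx]
      rw [h4, h5, h6, hzI i hi]
      ring
    have hzt : Tendsto (fun l => ∑ j, lamseq l j • (j : Fin n → ℝ)) atTop (𝓝 z) := by
      rw [← hlamz]
      refine tendsto_finset_sum _ fun j _ => ?_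
      have ht1 : Tendsto (fun l => lamseq l j) atTop (𝓝 (lam j)) := by
        have h7 := (hcoordt j).add (hθt.mul_const (lam j - μ j))
        have he : μ j + 1 * (lam j - μ j) = lam j := by ring
        rw [he] at h7
        exact h7
      exact ht1.smul_const _
    have hfIt : Tendsto (fun l => fI I (∑ j, lamseq l j • (j : Fin n → ℝ))) atTop (𝓝 r) := by
      have hco := tendsto_pi_nhds.mp hzt
      have hrw : ∀ w : Fin n → ℝ, fI I w = Iᶜ.inf' hIc w := fun w => fI_aux hIc w
      rw [hr]
      simp only [hrw]
      exact tendsto_finset_inf' hIc _ _ fun i _ => hco i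
    obtain ⟨l, hl⟩ := (hfIt.eventually (eventually_gt_nhds (show r - ε < r by linarith))).exists
    have hle : ((fI I (∑ j, lamseq l j • (j : Fin n → ℝ)) : ℝ) : EReal) ≤
        GfunE (convexHull ℝ ↑S) I (seq (φ (ψ l))) :=
      le_sSup ⟨_, hzmem l, hIcoord l, rfl⟩
    have hlt : ((r - ε : ℝ) : EReal) <
        ((fI I (∑ j, lamseq l j • (j : Fin n → ℝ)) : ℝ) : EReal) :=
      EReal.coe_lt_coe_iff.mpr hl
    exact absurd (hlt.trans_le hle) (not_lt.mpr (hφ (ψ l)).le)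
  have hlim : ∀ ε : ℝ, 0 < ε →
      ((r - ε : ℝ) : EReal) ≤ liminf (fun t => GfunE (convexHull ℝ ↑S) I (seq t)) atTop :=
    fun ε hε => le_liminf_of_le (by isBoundedDefault) (key ε hε)
  by_contra hcon
  rw [not_le] at hcon
  obtain ⟨q, hq1, hq2⟩ := EReal.lt_iff_exists_real_btwn.mp hcon
  have hqr : q < r := EReal.coe_lt_coe_iff.mp hq2
  have hq3 := hlim (r - q) (by linarith)
  rw [show r - (r - q) = q by ring] at hq3
  exact absurd hq1 (not_lt.mpr hq3)
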